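/- For every real number α, liminf over positive integers q of q·‖qα‖ is at most 1/√5, where ‖t‖ denotes the distance from t to the nearest integer. -/

import Mathlib

/-- Distance from a real number to the nearest integer. -/
noncomputable def distNearestInt (t : ℝ) : ℝ := ⨅ n : ℤ, |t - n|

lemma distNearestInt_nonneg (t : ℝ) : 0 ≤ distNearestInt t :=
  Real.iInf_nonneg fun _ => abs_nonneg _

lemma distNearestInt_le (t : ℝ) (n : ℤ) : distNearestInt t ≤ |t - n| :=
  ciInf_le ⟨0, fun _ ⟨_, h⟩ => h ▸ abs_nonneg _⟩ n

namespace HurwitzAux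

/-- complete quotients -/
noncomputable def X (α : ℝ) : ℕ → ℝ
  | 0 => α
  | n + 1 => (Int.fract (X α n))⁻¹

/-- numerator pairs (pₙ₋₁, pₙ) -/
noncomputable def P (α : ℝ) : ℕ → ℤ × ℤ
  | 0 => (1, ⌊α⌋)
  | n + 1 => ((P α n).2, ⌊X α (n + 1)⌋ * (P α n).2 + (P α n).1)

/-- denominator pairs (qₙ₋₁, qₙ) -/
noncomputable def Q (α : ℝ) : ℕ → ℤ × ℤ
  | 0 => (0, 1)
  | n + 1 => ((Q α n).2, ⌊X α (n + 1)⌋ * (Q α n).2 + (Q α n).1)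

lemma X_irrational {α : ℝ} (hα : Irrational α) : ∀ n, Irrational (X α n)
  | 0 => hα
  | n + 1 => by
    have h := X_irrational hα n
    have h2 : Irrational (Int.fract (X α n)) := by
      rw [Int.fract]
      exact Irrational.sub_intCast h _
    exact h2.inv

lemma fract_X_pos {α : ℝ} (hα : Irrational α) (n : ℕ) : 0 < Int.fract (X α n) := by
  refine lt_of_le_of_ne (Int.fract_nonneg _) ?_
  intro h
  have h2 : Irrational (Int.fract (X α n)) := by
    rw [Int.fract]; exact Irrational.sub_intCast (X_irrational hα n) _
  exact h2.ne_int 0 (by exact_mod_cast h.symm)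

lemma one_lt_X {α : ℝ} (hα : Irrational α) (n : ℕ) : 1 < X α (n + 1) := by
  have h1 : 0 < Int.fract (X α n) := fract_X_pos hα n
  have h2 : Int.fract (X α n) < 1 := Int.fract_lt_one _
  show 1 < (Int.fract (X α n))⁻¹
  exact (one_lt_inv₀ h1).mpr h2

lemma one_le_floor_X {α : ℝ} (hα : Irrational α) (n : ℕ) : 1 ≤ ⌊X α (n + 1)⌋ :=
  Int.le_floor.mpr (by exact_mod_cast (one_lt_X hα n).le)

/-- the key algebraic relation on complete quotients -/
lemma X_rel {α : ℝ} (hα : Irrational α) (n : ℕ) :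
    X α n = ⌊X α n⌋ + (X α (n + 1))⁻¹ := by
  have h : (X α (n + 1))⁻¹ = Int.fract (X α n) := by
    show ((Int.fract (X α n))⁻¹)⁻¹ = _
    rw [inv_inv]
  rw [h, Int.fract]
  ring

lemma Q_pos {α : ℝ} (hα : Irrational α) : ∀ n, 0 ≤ (Q α n).1 ∧ 1 ≤ (Q α n).2 := by
  intro n
  induction n with
  | zero => simp [Q]
  | succ n ih =>
    obtain ⟨h1, h2⟩ := ih
    have ha := one_le_floor_X hα n
    refine ⟨?_, ?_⟩
    · show (0:ℤ) ≤ (Q α n).2; omega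
    · show (1:ℤ) ≤ ⌊X α (n + 1)⌋ * (Q α n).2 + (Q α n).1; nlinarith

lemma Q_growth {α : ℝ} (hα : Irrational α) :
    ∀ n : ℕ, (n : ℤ) ≤ (Q α n).2 ∧ (n : ℤ) + 1 ≤ (Q α n).1 + (Q α n).2 := by
  intro n
  induction n with
  | zero => simp [Q]
  | succ n ih =>
    obtain ⟨h1, h2⟩ := ih
    have ha := one_le_floor_X hα n
    obtain ⟨hq1, hq2⟩ := Q_pos hα n
    constructor
    · show ((n:ℕ) + 1 : ℤ) ≤ ⌊X α (n + 1)⌋ * (Q α n).2 + (Q α n).1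
      push_cast
      nlinarith
    · show ((n:ℕ) + 1 : ℤ) + 1 ≤ (Q α n).2 + (⌊X α (n + 1)⌋ * (Q α n).2 + (Q α n).1)
      push_cast
      nlinarith

/-- correctness: α = (pₙ₋₁ + xₙ₊₁ pₙ)/(qₙ₋₁ + xₙ₊₁ qₙ) in cleared form -/
lemma correctness {α : ℝ} (hα : Irrational α) :
    ∀ n, α * ((Q α n).1 + X α (n + 1) * (Q α n).2)
    = (P α n).1 + X α (n + 1) * (P α n).2 := by
  intro n
  induction n with
  | zero =>
    have h : Int.fract α * X α 1 = 1 := by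
      show Int.fract (X α 0) * (Int.fract (X α 0))⁻¹ = 1
      exact mul_inv_cancel₀ (fract_X_pos hα 0).ne'
    have hf : Int.fract α = α - ⌊α⌋ := rfl
    show α * ((((0:ℤ)):ℝ) + X α 1 * (((1:ℤ)):ℝ)) = (((1:ℤ)):ℝ) + X α 1 * ((⌊α⌋ : ℤ) : ℝ)
    push_cast
    rw [hf] at h
    linear_combination h
  | succ n ih =>
    have e : X α (n + 1) * X α (n + 2) = ⌊X α (n + 1)⌋ * X α (n + 2) + 1 := by
      have hx := X_rel hα (n + 1)
      have hgt := one_lt_X hα (n + 1)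
      rw [show n + 1 + 1 = n + 2 from rfl] at hx hgt
      have hne : X α (n + 2) ≠ 0 := by linarith
      have hc : X α (n + 2) * (X α (n + 2))⁻¹ = 1 := mul_inv_cancel₀ hne
      linear_combination X α (n + 2) * hx + hc
    show α * (((Q α n).2 : ℝ) + X α (n + 2) * ((⌊X α (n + 1)⌋ * (Q α n).2 + (Q α n).1 : ℤ) : ℝ))
        = ((P α n).2 : ℝ) + X α (n + 2) * ((⌊X α (n + 1)⌋ * (P α n).2 + (P α n).1 : ℤ) : ℝ)
    push_cast
    linear_combination X α (n + 2) * ih - (α * ((Q α n).2 : ℝ) - ((P α n).2 : ℝ)) * e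

lemma determinant (α : ℝ) :
    ∀ n, (P α n).2 * (Q α n).1 - (P α n).1 * (Q α n).2 = (-1 : ℤ) ^ (n + 1) := by
  intro n
  induction n with
  | zero => simp [P, Q]
  | succ n ih =>
    show (⌊X α (n + 1)⌋ * (P α n).2 + (P α n).1) * (Q α n).2
        - (P α n).2 * (⌊X α (n + 1)⌋ * (Q α n).2 + (Q α n).1) = (-1) ^ (n + 1 + 1)
    rw [pow_succ]
    linear_combination (-1 : ℤ) * ih

noncomputable def γ (α : ℝ) (n : ℕ) : ℝ := ((Q α n).1 : ℝ) / ((Q α n).2 : ℝ)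

lemma Q2_ne {α : ℝ} (hα : Irrational α) (n : ℕ) : ((Q α n).2 : ℝ) ≠ 0 := by
  have := (Q_pos hα n).2
  exact_mod_cast (by omega : (Q α n).2 ≠ 0)

lemma Q2_pos {α : ℝ} (hα : Irrational α) (n : ℕ) : (0:ℝ) < ((Q α n).2 : ℝ) := by
  have := (Q_pos hα n).2
  exact_mod_cast (by omega : (0:ℤ) < (Q α n).2)

lemma γ_nonneg {α : ℝ} (hα : Irrational α) (n : ℕ) : 0 ≤ γ α n := by
  obtain ⟨h1, h2⟩ := Q_pos hα n
  exact div_nonneg (by exact_mod_cast h1) (Q2_pos hα n).le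

lemma γ_pos_succ {α : ℝ} (hα : Irrational α) (n : ℕ) : 0 < γ α (n + 1) := by
  apply div_pos
  · have e : (Q α (n + 1)).1 = (Q α n).2 := rfl
    rw [e]; exact Q2_pos hα n
  · exact Q2_pos hα (n + 1)

lemma γ_rec {α : ℝ} (hα : Irrational α) (n : ℕ) :
    (γ α (n + 1))⁻¹ = ⌊X α (n + 1)⌋ + γ α n := by
  have hq := Q2_ne hα n
  have hq' := Q2_ne hα (n + 1)
  have e2 : ((Q α (n + 1)).2 : ℝ) = (⌊X α (n + 1)⌋ : ℝ) * (Q α n).2 + (Q α n).1 := by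
    show (((⌊X α (n + 1)⌋ * (Q α n).2 + (Q α n).1 : ℤ)) : ℝ) = _
    push_cast; ring
  have e1 : ((Q α (n + 1)).1 : ℝ) = ((Q α n).2 : ℝ) := rfl
  rw [γ, γ, e1, inv_div, e2]
  field_simp

/-- key error formula : qₙ |qₙ α - pₙ| = 1/(xₙ₊₁ + γₙ) -/
lemma error_formula {α : ℝ} (hα : Irrational α) (n : ℕ) :
    ((Q α n).2 : ℝ) * |((Q α n).2 : ℝ) * α - ((P α n).2 : ℝ)|
      = (X α (n + 1) + γ α n)⁻¹ := by
  obtain ⟨h1, h2⟩ := Q_pos hα n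
  have hq : (0:ℝ) < ((Q α n).2 : ℝ) := Q2_pos hα n
  have hx : 1 < X α (n + 1) := one_lt_X hα n
  have h1R : (0:ℝ) ≤ ((Q α n).1 : ℝ) := by exact_mod_cast h1
  have hd : (0:ℝ) < ((Q α n).1 : ℝ) + X α (n + 1) * (Q α n).2 := by nlinarith
  have key : ((Q α n).2 : ℝ) * α - ((P α n).2 : ℝ)
      = (-1:ℝ) ^ n / (((Q α n).1 : ℝ) + X α (n + 1) * (Q α n).2) := by
    rw [eq_div_iff hd.ne']
    have hc := correctness hα n
    have hdet : ((P α n).2 : ℝ) * ((Q α n).1 : ℝ) - ((P α n).1 : ℝ) * ((Q α n).2 : ℝ)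
        = (-1:ℝ) ^ (n + 1) := by exact_mod_cast determinant α n
    rw [pow_succ] at hdet
    linear_combination ((Q α n).2 : ℝ) * hc - hdet
  rw [key, abs_div, abs_pow, abs_neg, abs_one, one_pow, abs_of_pos hd, γ]
  have e : X α (n + 1) + ((Q α n).1 : ℝ) / ((Q α n).2 : ℝ)
      = (((Q α n).1 : ℝ) + X α (n + 1) * (Q α n).2) / ((Q α n).2 : ℝ) := by
    field_simp
    ring
  rw [e, inv_div, mul_one_div]

/-- sum identity : xₙ₊₁ + γₙ = 1/xₙ₊₂ + 1/γₙ₊₁ -/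
lemma sum_identity {α : ℝ} (hα : Irrational α) (n : ℕ) :
    X α (n + 1) + γ α n = (X α (n + 2))⁻¹ + (γ α (n + 1))⁻¹ := by
  have h1 := X_rel hα (n + 1)
  rw [show n + 1 + 1 = n + 2 from rfl] at h1
  have h2 := γ_rec hα n
  rw [h2]
  linarith [h1]

lemma golden_bound {β g s : ℝ} (hs : s = Real.sqrt 5) (hgdef : g = (s - 1) / 2)
    {gm : ℝ} (hβ : 1 < β) (hg : 0 < gm)
    (h1 : β⁻¹ + gm⁻¹ < s) (h2 : β + gm < s) : g < gm := by
  have hs2 : s ^ 2 = 5 := by rw [hs]; exact Real.sq_sqrt (by norm_num)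
  have hs0 : 2 < s := by nlinarith [Real.sqrt_nonneg 5, hs2]
  have hβ0 : 0 < β := by linarith
  have h1' : gm + β < s * (β * gm) := by
    have e : β⁻¹ + gm⁻¹ = (gm + β) / (β * gm) := by field_simp
    rw [e, div_lt_iff₀ (by positivity)] at h1
    exact h1
  have hβlt : β < s - gm := by linarith
  have step1 : gm < β * (s * gm - 1) := by nlinarith
  have hsg : 0 < s * gm - 1 := by
    by_contra h
    push_neg at h
    nlinarith
  have step2 : gm < (s - gm) * (s * gm - 1) := by nlinarith
  nlinarith [sq_nonneg (2 * gm - s + 1)]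

lemma exists_good {α : ℝ} (hα : Irrational α) (N : ℕ) :
    ∃ n, N ≤ n ∧ Real.sqrt 5 ≤ X α (n + 1) + γ α n := by
  by_contra h
  push_neg at h
  set s := Real.sqrt 5 with hs
  set g := (s - 1) / 2 with hgdef
  have hs2 : s ^ 2 = 5 := Real.sq_sqrt (by norm_num)
  have hs0 : 2 < s := by nlinarith [Real.sqrt_nonneg 5]
  have hgpos : 0 < g := by rw [hgdef]; linarith
  have hγ : ∀ n, N ≤ n → g < γ α (n + 1) := by
    intro n hn
    have c1 := h n hn
    have c2 := h (n + 1) (le_trans hn n.le_succ)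
    rw [sum_identity hα n] at c1
    rw [show n + 1 + 1 = n + 2 from rfl] at c2
    exact golden_bound hs hgdef (one_lt_X hα (n + 1)) (γ_pos_succ hα n) c1 c2
  have hA := hγ N le_rfl
  have hB := hγ (N + 1) N.le_succ
  have hrec := γ_rec hα (N + 1)
  rw [show N + 1 + 1 = N + 2 from rfl] at hrec hB
  have ha : (1 : ℝ) ≤ (⌊X α (N + 2)⌋ : ℝ) := by exact_mod_cast one_le_floor_X hα (N + 1)
  have hg1 : g * (1 + g) = 1 := by
    rw [hgdef]; ring_nf; nlinarith
  have hginv : g⁻¹ = 1 + g := inv_eq_of_mul_eq_one_right hg1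
  have h5 : g⁻¹ < (γ α (N + 2))⁻¹ := by
    rw [hrec, hginv]; linarith
  have hp : 0 < γ α (N + 2) := γ_pos_succ hα (N + 1)
  have hcontra : γ α (N + 2) < g := by
    have e1 : g * g⁻¹ = 1 := mul_inv_cancel₀ hgpos.ne'
    have e2 : γ α (N + 2) * (γ α (N + 2))⁻¹ = 1 := mul_inv_cancel₀ hp.ne'
    nlinarith [mul_lt_mul_of_pos_left h5 (mul_pos hgpos hp)]
  linarith

end HurwitzAux

theorem hurwitz_upper_bound (α : ℝ) :
    Filter.liminf (fun q : ℕ => (q : ℝ) * distNearestInt (q * α)) Filter.atTop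
      ≤ 1 / Real.sqrt 5 := by
  have h5pos : (0:ℝ) < Real.sqrt 5 := Real.sqrt_pos.mpr (by norm_num)
  apply Filter.liminf_le_of_frequently_le
  · rw [Filter.frequently_atTop]
    intro N
    by_cases hα : Irrational α
    · obtain ⟨n, hn, hgood⟩ := HurwitzAux.exists_good hα N
      set q := (HurwitzAux.Q α n).2 with hq
      have hq1 : 1 ≤ q := (HurwitzAux.Q_pos hα n).2
      have hqn : (n : ℤ) ≤ q := (HurwitzAux.Q_growth hα n).1
      refine ⟨q.toNat, by omega, ?_⟩
      have hcast : ((q.toNat : ℕ) : ℝ) = (q : ℝ) := by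
        exact_mod_cast Int.toNat_of_nonneg (by omega)
      have hqR : (0:ℝ) ≤ (q : ℝ) := by exact_mod_cast (by omega : (0:ℤ) ≤ q)
      calc (q.toNat : ℝ) * distNearestInt ((q.toNat : ℕ) * α)
          ≤ (q : ℝ) * |(q : ℝ) * α - ((HurwitzAux.P α n).2 : ℝ)| := by
            rw [hcast]
            exact mul_le_mul_of_nonneg_left (distNearestInt_le _ _) hqR
        _ = (HurwitzAux.X α (n + 1) + HurwitzAux.γ α n)⁻¹ := HurwitzAux.error_formula hα n
        _ ≤ 1 / Real.sqrt 5 := by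
            rw [one_div]
            exact inv_anti₀ h5pos hgood
    · rw [Irrational] at hα
      push_neg at hα
      obtain ⟨r, hr⟩ := hα
      refine ⟨r.den * (N + 1), by nlinarith [r.pos], ?_⟩
      have hint : ((r.den * (N + 1) : ℕ) : ℝ) * α = (((N + 1 : ℤ) * r.num : ℤ) : ℝ) := by
        rw [← hr, Rat.cast_def]
        push_cast
        have hden : (r.den : ℝ) ≠ 0 := by exact_mod_cast r.den_nz
        field_simp
      have h0 : distNearestInt (((r.den * (N + 1) : ℕ) : ℝ) * α) = 0 := by
        apply le_antisymm
        · calc distNearestInt _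
              ≤ |((r.den * (N + 1) : ℕ) : ℝ) * α - (((N + 1 : ℤ) * r.num : ℤ) : ℝ)| :=
                distNearestInt_le _ _
            _ = 0 := by rw [hint, sub_self, abs_zero]
        · exact distNearestInt_nonneg _
      rw [h0, mul_zero]
      positivity
  · exact Filter.isBoundedUnder_of
      ⟨0, fun q => mul_nonneg (Nat.cast_nonneg q) (distNearestInt_nonneg _)⟩
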